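/- For T > 0, the quantity G(T) := (exp(−T/4) − √(πT) Φ(−√(T/2))) / (exp(−T/4) + √(πT) Φ(−√(T/2))) satisfies 0 < G(T) < 1 for every T > 0, G is strictly decreasing on (0,∞), and lim_{T→0+} G(T) = 1. -/

import Mathlib

open Real Set Filter MeasureTheory Topology

noncomputable def npdf (y : ℝ) : ℝ := (Real.sqrt (2 * π))⁻¹ * Real.exp (-y ^ 2 / 2)
noncomputable def ncdf (t : ℝ) : ℝ := ∫ y in Iic t, npdf y

lemma npdf_pos (y : ℝ) : 0 < npdf y := by
  have h : 0 < Real.sqrt (2 * π) := Real.sqrt_pos.2 (by positivity)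
  unfold npdf; positivity

lemma npdf_even (y : ℝ) : npdf (-y) = npdf y := by unfold npdf; rw [neg_pow]; norm_num

lemma continuous_npdf : Continuous npdf := by unfold npdf; fun_prop

lemma integrable_npdf : Integrable npdf := by
  have h : Integrable (fun y : ℝ => Real.exp (-(1/2 : ℝ) * y ^ 2)) :=
    integrable_exp_neg_mul_sq (by norm_num)
  have h2 : Integrable (fun y : ℝ => Real.exp (-y ^ 2 / 2)) := by
    convert h using 2 with y
    ring_nf
  exact h2.const_mul _

lemma hasDerivAt_npdf (y : ℝ) : HasDerivAt npdf (-y * npdf y) y := by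
  have h1 : HasDerivAt (fun y : ℝ => -y ^ 2 / 2) (-y) y := by
    have := ((hasDerivAt_pow 2 y).neg).div_const 2
    refine this.congr_deriv ?_
    push_cast
    ring
  have h2 := h1.exp.const_mul ((Real.sqrt (2 * π))⁻¹)
  refine h2.congr_deriv ?_
  unfold npdf; ring

lemma ncdf_eq (t : ℝ) : ncdf t = ncdf 0 + ∫ y in (0:ℝ)..t, npdf y := by
  rw [← intervalIntegral.integral_Iic_sub_Iic integrable_npdf.integrableOn
    integrable_npdf.integrableOn]
  unfold ncdf; ring

lemma hasDerivAt_ncdf (t : ℝ) : HasDerivAt ncdf (npdf t) t := by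
  have h : HasDerivAt (fun u => ∫ y in (0:ℝ)..u, npdf y) (npdf t) t :=
    intervalIntegral.integral_hasDerivAt_right integrable_npdf.intervalIntegrable
      (continuous_npdf.stronglyMeasurableAtFilter _ _) continuous_npdf.continuousAt
  have h2 := h.const_add (ncdf 0)
  have : (fun u => ncdf 0 + ∫ y in (0:ℝ)..u, npdf y) = ncdf :=
    funext fun u => (ncdf_eq u).symm
  rwa [this] at h2

lemma ncdf_pos (t : ℝ) : 0 < ncdf t := by
  unfold ncdf
  rw [setIntegral_pos_iff_support_of_nonneg_ae
    (Filter.Eventually.of_forall fun y => (npdf_pos y).le) integrable_npdf.integrableOn]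
  have hs : Function.support npdf = univ := by
    ext y; simp [(npdf_pos y).ne']
  simp [hs, Real.volume_Iic]

lemma ncdf_le (t : ℝ) : ncdf t ≤ ∫ y, npdf y :=
  setIntegral_le_integral integrable_npdf (Filter.Eventually.of_forall fun y => (npdf_pos y).le)

lemma tendsto_ncdf_atBot : Tendsto ncdf atBot (𝓝 0) := by
  have h := intervalIntegral_tendsto_integral_Iic (0:ℝ) (μ := volume)
    integrable_npdf.integrableOn tendsto_id
  have h2 : Tendsto (fun t : ℝ => ncdf 0 - ∫ y in t..(0:ℝ), npdf y) atBot
      (𝓝 (ncdf 0 - ncdf 0)) := tendsto_const_nhds.sub h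
  rw [sub_self] at h2
  refine h2.congr fun t => ?_
  rw [intervalIntegral.integral_symm, ncdf_eq t]; ring

lemma tendsto_ncdf_neg : Tendsto (fun x => ncdf (-x)) atTop (𝓝 0) :=
  tendsto_ncdf_atBot.comp tendsto_neg_atTop_atBot

lemma tendsto_npdf_atTop : Tendsto npdf atTop (𝓝 0) := by
  have h1 : Tendsto (fun y : ℝ => -y ^ 2 / 2) atTop atBot := by
    apply Filter.Tendsto.atBot_div_const (by norm_num : (0:ℝ) < 2)
    exact tendsto_neg_atBot_iff.2 (tendsto_pow_atTop two_ne_zero)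
  have h2 := (Real.tendsto_exp_atBot.comp h1).const_mul ((Real.sqrt (2 * π))⁻¹)
  rw [mul_zero] at h2
  refine h2.congr fun y => ?_
  simp [npdf, Function.comp]

lemma hasDerivAt_ncdf_neg (x : ℝ) : HasDerivAt (fun x => ncdf (-x)) (-npdf x) x := by
  have h := (hasDerivAt_ncdf (-x)).comp x (hasDerivAt_neg x)
  have : npdf (-x) * -1 = -npdf x := by rw [npdf_even]; ring
  rw [this] at h
  exact h

noncomputable def vlo (x : ℝ) : ℝ := ncdf (-x) - x * npdf x / (1 + x ^ 2)

lemma hasDerivAt_vlo (x : ℝ) :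
    HasDerivAt vlo (-(2 * npdf x) / (1 + x ^ 2) ^ 2) x := by
  have hnum : HasDerivAt (fun x : ℝ => x * npdf x)
      (1 * npdf x + x * (-x * npdf x)) x := (hasDerivAt_id x).mul (hasDerivAt_npdf x)
  have hden : HasDerivAt (fun x : ℝ => 1 + x ^ 2) ((2:ℕ) * x ^ 1) x :=
    (hasDerivAt_pow 2 x).const_add 1
  have hden' : (1 : ℝ) + x ^ 2 ≠ 0 := by positivity
  have hB := hnum.div hden hden'
  have hv := (hasDerivAt_ncdf_neg x).sub hB
  refine hv.congr_deriv ?_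
  field_simp
  ring

lemma vlo_pos (x : ℝ) : 0 < vlo x := by
  have hanti : StrictAnti vlo := by
    apply strictAnti_of_deriv_neg
    intro y
    rw [(hasDerivAt_vlo y).deriv]
    have := npdf_pos y
    apply div_neg_of_neg_of_pos (by linarith) (by positivity)
  have htend : Tendsto vlo atTop (𝓝 0) := by
    have h2 : Tendsto (fun x : ℝ => x * npdf x / (1 + x ^ 2)) atTop (𝓝 0) := by
      apply squeeze_zero' (g := npdf)
      · filter_upwards [eventually_ge_atTop (0:ℝ)] with y hy
        have := (npdf_pos y).le
        positivity
      · filter_upwards [eventually_ge_atTop (0:ℝ)] with y hy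
        rw [div_le_iff₀ (by positivity)]
        have h1 : y ≤ 1 + y ^ 2 := by nlinarith
        have := (npdf_pos y).le
        nlinarith
      · exact tendsto_npdf_atTop
    have := tendsto_ncdf_neg.sub h2
    rw [sub_zero] at this
    exact this
  have hnonneg : ∀ y, 0 ≤ vlo y := fun y =>
    le_of_tendsto htend (eventually_atTop.2 ⟨y, fun z hz => hanti.antitone hz⟩)
  calc (0:ℝ) ≤ vlo (x + 1) := hnonneg _
    _ < vlo x := hanti (lt_add_one x)

lemma lower_bound (x : ℝ) : x * npdf x / (1 + x ^ 2) < ncdf (-x) := by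
  have := vlo_pos x
  unfold vlo at this
  linarith

noncomputable def wup (x : ℝ) : ℝ := npdf x / x - ncdf (-x)

lemma hasDerivAt_wup {x : ℝ} (hx : x ≠ 0) :
    HasDerivAt wup (-npdf x / x ^ 2) x := by
  have hB := (hasDerivAt_npdf x).div (hasDerivAt_id x) hx
  have hw := hB.sub (hasDerivAt_ncdf_neg x)
  refine hw.congr_deriv ?_
  simp only [id]
  field_simp
  ring

lemma tendsto_wup : Tendsto wup atTop (𝓝 0) := by
  have h1 : Tendsto (fun x : ℝ => npdf x / x) atTop (𝓝 0) := by
    have := tendsto_npdf_atTop.mul tendsto_inv_atTop_zero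
    rw [mul_zero] at this
    exact this.congr fun y => (div_eq_mul_inv _ _).symm
  have := h1.sub tendsto_ncdf_neg
  rwa [sub_zero] at this

lemma wup_pos {x : ℝ} (hx : 0 < x) : 0 < wup x := by
  have hanti : StrictAntiOn wup (Ioi 0) := by
    apply strictAntiOn_of_deriv_neg (convex_Ioi 0)
    · intro y hy
      exact ((hasDerivAt_wup (ne_of_gt hy)).continuousAt).continuousWithinAt
    · intro y hy
      rw [interior_Ioi] at hy
      rw [(hasDerivAt_wup (ne_of_gt hy)).deriv]
      have := npdf_pos y
      have hy2 : (0:ℝ) < y ^ 2 := pow_pos (mem_Ioi.1 hy) 2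
      apply div_neg_of_neg_of_pos (by linarith) hy2
  have hnonneg : 0 ≤ wup x := by
    apply le_of_tendsto tendsto_wup
    filter_upwards [eventually_ge_atTop x] with z hz
    rcases eq_or_lt_of_le hz with rfl | h
    · exact le_rfl
    · exact (hanti (mem_Ioi.2 hx) (mem_Ioi.2 (lt_trans hx h)) h).le
  calc (0:ℝ) ≤ wup (x + 1) := by
        apply le_of_tendsto tendsto_wup
        filter_upwards [eventually_ge_atTop (x+1)] with z hz
        rcases eq_or_lt_of_le hz with rfl | h
        · exact le_rfl
        · exact (hanti (mem_Ioi.2 (by linarith)) (mem_Ioi.2 (by linarith)) h).le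
    _ < wup x := hanti (mem_Ioi.2 hx) (mem_Ioi.2 (by linarith)) (lt_add_one x)

lemma upper_bound {x : ℝ} (hx : 0 < x) : ncdf (-x) < npdf x / x := by
  have := wup_pos hx
  unfold wup at this
  linarith

noncomputable def hfun (x : ℝ) : ℝ := x * Real.exp (x ^ 2 / 2) * ncdf (-x)

lemma hasDerivAt_hfun (x : ℝ) : HasDerivAt hfun
    ((1 * Real.exp (x ^ 2 / 2) + x * (Real.exp (x ^ 2 / 2) * ((2:ℕ) * x ^ 1 / 2))) * ncdf (-x)
      + x * Real.exp (x ^ 2 / 2) * -npdf x) x := by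
  have hin : HasDerivAt (fun x : ℝ => x ^ 2 / 2) ((2:ℕ) * x ^ 1 / 2) x :=
    (hasDerivAt_pow 2 x).div_const 2
  have h1 : HasDerivAt (fun x : ℝ => x * Real.exp (x ^ 2 / 2))
      (1 * Real.exp (x ^ 2 / 2) + x * (Real.exp (x ^ 2 / 2) * ((2:ℕ) * x ^ 1 / 2))) x :=
    (hasDerivAt_id x).mul hin.exp
  exact h1.mul (hasDerivAt_ncdf_neg x)

lemma hfun_strictMono : StrictMonoOn hfun (Ioi 0) := by
  apply strictMonoOn_of_deriv_pos (convex_Ioi 0)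
  · intro y _
    exact (hasDerivAt_hfun y).continuousAt.continuousWithinAt
  · intro y hy
    rw [interior_Ioi] at hy
    have hy0 : 0 < y := mem_Ioi.1 hy
    rw [(hasDerivAt_hfun y).deriv]
    have hlb := lower_bound y
    have hE : 0 < Real.exp (y ^ 2 / 2) := Real.exp_pos _
    have hden : (0:ℝ) < 1 + y ^ 2 := by positivity
    have key : y * npdf y < ncdf (-y) * (1 + y ^ 2) := by
      have := (div_lt_iff₀ hden).1 hlb
      linarith
    have h2 : 0 < Real.exp (y ^ 2 / 2) * (ncdf (-y) * (1 + y ^ 2) - y * npdf y) :=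
      mul_pos hE (by linarith)
    push_cast
    nlinarith [h2]

lemma sqrt2pi_pos : 0 < Real.sqrt (2 * π) := Real.sqrt_pos.2 (by positivity)

lemma repr_f {T : ℝ} (hT : 0 < T) :
    Real.sqrt (π * T) = Real.sqrt (2 * π) * Real.sqrt (T / 2) := by
  rw [← Real.sqrt_mul (by positivity) (T / 2)]
  congr 1; ring

lemma repr_E {T : ℝ} (hT : 0 < T) :
    Real.exp (-T / 4) = (Real.exp (Real.sqrt (T / 2) ^ 2 / 2))⁻¹ := by
  rw [Real.sq_sqrt (by linarith : (0:ℝ) ≤ T / 2), ← Real.exp_neg]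
  congr 1; ring

lemma repr_E' {T : ℝ} (hT : 0 < T) :
    Real.exp (-T / 4) = Real.sqrt (2 * π) * npdf (Real.sqrt (T / 2)) := by
  unfold npdf
  rw [← mul_assoc, mul_inv_cancel₀ (ne_of_gt sqrt2pi_pos), one_mul,
    Real.sq_sqrt (by linarith : (0:ℝ) ≤ T / 2)]
  congr 1; ring

/-- the generalized Pickands constant for α = 1,
G(T) = (exp(−T/4) − √(πT) Φ(−√(T/2)))/(exp(−T/4) + √(πT) Φ(−√(T/2))),
satisfies 0 < G(T) < 1 for all T > 0, is strictly decreasing on (0,∞),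
and tends to 1 as T → 0⁺. -/
theorem generalized_pickands_one (Φ : ℝ → ℝ)
    (hΦ : ∀ x : ℝ, Φ x = ∫ y in Iic x, (Real.sqrt (2 * π))⁻¹ * Real.exp (-y ^ 2 / 2))
    (G : ℝ → ℝ)
    (hG : ∀ T : ℝ, G T = (Real.exp (-T / 4) - Real.sqrt (π * T) * Φ (-Real.sqrt (T / 2)))
      / (Real.exp (-T / 4) + Real.sqrt (π * T) * Φ (-Real.sqrt (T / 2)))) :
    (∀ T : ℝ, 0 < T → 0 < G T ∧ G T < 1) ∧
      StrictAntiOn G (Ioi 0) ∧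
      Tendsto G (nhdsWithin 0 (Ioi 0)) (nhds 1) := by
  have hΦn : ∀ t : ℝ, Φ t = ncdf t := fun t => by rw [hΦ t]; rfl
  -- key bounds on f(T) := √(πT) Φ(−√(T/2))
  have hEf : ∀ T : ℝ, 0 < T →
      0 < Real.sqrt (π * T) * Φ (-Real.sqrt (T / 2)) ∧
      Real.sqrt (π * T) * Φ (-Real.sqrt (T / 2)) < Real.exp (-T / 4) := by
    intro T hT
    have hx : 0 < Real.sqrt (T / 2) := Real.sqrt_pos.2 (by linarith)
    set x := Real.sqrt (T / 2) with hxdef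
    constructor
    · rw [hΦn, repr_f hT]
      have h1 := ncdf_pos (-x)
      have h2 := sqrt2pi_pos
      positivity
    · rw [hΦn, repr_f hT, repr_E' hT]
      have hub := upper_bound hx
      have hkey : x * ncdf (-x) < npdf x := by
        have h3 := mul_lt_mul_of_pos_left hub hx
        rwa [mul_div_cancel₀ _ (ne_of_gt hx)] at h3
      calc Real.sqrt (2 * π) * x * ncdf (-x)
          = Real.sqrt (2 * π) * (x * ncdf (-x)) := by ring
        _ < Real.sqrt (2 * π) * npdf x := mul_lt_mul_of_pos_left hkey sqrt2pi_pos
  refine ⟨?_, ?_, ?_⟩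
  · -- 0 < G T < 1
    intro T hT
    obtain ⟨hf0, hfE⟩ := hEf T hT
    have hE0 := Real.exp_pos (-T / 4)
    rw [hG]
    constructor
    · exact div_pos (by linarith) (by linarith)
    · rw [div_lt_one (by linarith)]
      linarith
  · -- strict antitone
    intro a ha b hb hab
    rw [mem_Ioi] at ha hb
    have hxa : 0 < Real.sqrt (a / 2) := Real.sqrt_pos.2 (by linarith)
    have hxb : 0 < Real.sqrt (b / 2) := Real.sqrt_pos.2 (by linarith)
    set xa := Real.sqrt (a / 2) with hxadef
    set xb := Real.sqrt (b / 2) with hxbdef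
    have hxab : xa < xb := Real.sqrt_lt_sqrt (by linarith) (by linarith)
    have hh : hfun xa < hfun xb := hfun_strictMono (mem_Ioi.2 hxa) (mem_Ioi.2 hxb) hxab
    obtain ⟨hfa0, hfaE⟩ := hEf a ha
    obtain ⟨hfb0, hfbE⟩ := hEf b hb
    have hEa := Real.exp_pos (-a / 4)
    have hEb := Real.exp_pos (-b / 4)
    -- cross inequality
    have hq : Real.sqrt (π * a) * Φ (-xa) * Real.exp (-b / 4)
        < Real.sqrt (π * b) * Φ (-xb) * Real.exp (-a / 4) := by
      rw [hΦn, hΦn, repr_f ha, repr_f hb, repr_E ha, repr_E hb]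
      unfold hfun at hh
      have hu : (0:ℝ) < Real.exp (xa ^ 2 / 2) := Real.exp_pos _
      have hv : (0:ℝ) < Real.exp (xb ^ 2 / 2) := Real.exp_pos _
      rw [← hxadef, ← hxbdef]
      have hs := sqrt2pi_pos
      have h4 := mul_lt_mul_of_pos_left hh hs
      simp only [← div_eq_mul_inv]
      rw [div_lt_div_iff₀ hv hu]
      nlinarith [h4]
    rw [hG a, hG b]
    rw [div_lt_div_iff₀ (by linarith) (by linarith)]
    nlinarith [hq]
  · -- limit 1
    have hGfun : G = fun T => (Real.exp (-T / 4) - Real.sqrt (π * T) * Φ (-Real.sqrt (T / 2)))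
        / (Real.exp (-T / 4) + Real.sqrt (π * T) * Φ (-Real.sqrt (T / 2))) := funext hG
    rw [hGfun]
    have t1 : Tendsto (fun T : ℝ => Real.exp (-T / 4)) (nhdsWithin 0 (Ioi 0)) (𝓝 1) := by
      have hc : Continuous fun T : ℝ => Real.exp (-T / 4) := by fun_prop
      have := hc.tendsto 0
      norm_num at this
      exact this.mono_left nhdsWithin_le_nhds
    have t2 : Tendsto (fun T : ℝ => Real.sqrt (π * T) * Φ (-Real.sqrt (T / 2)))
        (nhdsWithin 0 (Ioi 0)) (𝓝 0) := by
      apply squeeze_zero' (g := fun T : ℝ => Real.sqrt (π * T) * ∫ y, npdf y)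
      · filter_upwards [self_mem_nhdsWithin] with T _
        rw [hΦn]
        exact mul_nonneg (Real.sqrt_nonneg _) (ncdf_pos _).le
      · filter_upwards [self_mem_nhdsWithin] with T _
        rw [hΦn]
        exact mul_le_mul_of_nonneg_left (ncdf_le _) (Real.sqrt_nonneg _)
      · have hc : Continuous fun T : ℝ => Real.sqrt (π * T) * ∫ y, npdf y := by fun_prop
        have := hc.tendsto 0
        norm_num at this
        exact this.mono_left nhdsWithin_le_nhds
    have hfin := (t1.sub t2).div (t1.add t2) (by norm_num)
    rw [show ((1:ℝ) - 0) / (1 + 0) = 1 by norm_num] at hfin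
    exact hfin
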